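/- Let l ≤ m be even positive integers. Then content((l, l, m)) = {l/2, l/2, m/2 + 1}, and the only partition of 2l+m whose content equals content((l, l, m)) is (l, l, m) (parts listed in increasing order). -/
import Mathlib


namespace BG

variable {α : Type*}

/-- One step of Robinson–Schensted row insertion: insert `x` into a weakly
increasing row, bumping the leftmost entry strictly greater than `x`. -/
def rowInsert [LinearOrder α] : List α → α → List α × Option α
  | [], x => ([x], none)
  | y :: ys, x =>
    if x < y then (x :: ys, some y)
    else
      let p := rowInsert ys x
      (y :: p.1, p.2)

/-- Insert a letter into a tableau (list of rows, top row first) by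
Robinson–Schensted row insertion. -/
def insertT [LinearOrder α] : List (List α) → α → List (List α)
  | [], x => [[x]]
  | r :: rs, x =>
    match rowInsert r x with
    | (r', none) => r' :: rs
    | (r', some y) => r' :: insertT rs y

/-- The insertion tableau of the Robinson–Schensted algorithm. -/
def RS [LinearOrder α] (w : List α) : List (List α) := w.foldl insertT []

/-- The partition underlying a tableau: the list of its row lengths
(top row first, so weakly decreasing). -/
def part (T : List (List α)) : List ℕ := T.map List.length

/-- The reversed negation of a row. -/
def negRow [Neg α] (l : List α) : List α := l.reverse.map (fun x => -x)

/-- Every column of a left-justified array (list of rows, top to bottom) is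
strictly decreasing from top to bottom, where entries must decrease strictly
across any gap occurring in the middle of a column. -/
def ColumnStrict [LT α] (B : List (List α)) : Prop :=
  ∀ j : ℕ, List.Chain' (fun x y => y < x) (B.filterMap (fun r => r[j]?))

/-- A left-justified array is row equivalent to column strict if its entries can
be permuted within rows so that every column is strictly decreasing. -/
def RowEquivColumnStrict [LT α] (A : List (List α)) : Prop :=
  ∃ B, List.Forall₂ List.Perm A B ∧ ColumnStrict B

/-- Elementary Knuth moves on words of integers. -/
inductive KnuthStep : List ℤ → List ℤ → Prop
  | move1 (u v : List ℤ) (x y z : ℤ) (hxy : x ≤ y) (hyz : y < z) :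
      KnuthStep (u ++ x :: z :: y :: v) (u ++ z :: x :: y :: v)
  | move2 (u v : List ℤ) (x y z : ℤ) (hxy : x < y) (hyz : y ≤ z) :
      KnuthStep (u ++ y :: x :: z :: v) (u ++ y :: z :: x :: v)

/-- Knuth equivalence of words of integers. -/
def KnuthEquiv : List ℤ → List ℤ → Prop := Relation.EqvGen KnuthStep

/-- Generators of the τ-equivalence: Knuth moves (R1), negating the last letter
when its absolute value exceeds that of the previous letter (R2), and
transposing the last two letters when they have opposite signs (R3). -/
inductive TauStep : List ℤ → List ℤ → Prop
  | knuth (u v : List ℤ) : KnuthStep u v → TauStep u v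
  | negLast (u : List ℤ) (b a : ℤ) (h : |b| < |a|) :
      TauStep (u ++ [b, a]) (u ++ [b, -a])
  | swapLast (u : List ℤ) (b a : ℤ) (h : b * a < 0) :
      TauStep (u ++ [b, a]) (u ++ [a, b])

/-- The τ-equivalence on words of integers. -/
def TauEquiv : List ℤ → List ℤ → Prop := Relation.EqvGen TauStep

/-- A larger-smaller transposition. -/
inductive LSStep : List ℤ → List ℤ → Prop
  | swap (u w : List ℤ) (a b : ℤ) (h : b < a) :
      LSStep (u ++ a :: b :: w) (u ++ b :: a :: w)

/-- Dominance order on partitions (weakly decreasing lists of naturals). -/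
def DomLE (μ ν : List ℕ) : Prop :=
  μ.sum = ν.sum ∧ ∀ k : ℕ, (μ.take k).sum ≤ (ν.take k).sum

/-- The content of a partition, given as a weakly decreasing list of naturals:
reverse to increasing order `(q₁ ≤ … ≤ q_m)`, prepend a zero part if necessary
so that the number of parts is odd, and take the multiset of
`⌊(qᵢ + i - 1)/2⌋` (1-indexed). -/
def contentP (q : List ℕ) : Multiset ℕ :=
  let q₁ := q.reverse
  let q₂ := if q₁.length % 2 = 1 then q₁ else 0 :: q₁
  ↑((List.range q₂.length).map (fun i => (q₂.getD i 0 + i) / 2))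

/-- Membership in `sTab^≤(P)` where `rows` is the list of row lengths of the
symmetric pyramid `P` (top to bottom): correct shape, skew-symmetry with
respect to the centre of the pyramid, weakly increasing rows, and all entries
in `ℤ` or all entries in `½ + ℤ`. -/
def MemSTabLe (rows : List ℕ) (A : List (List ℚ)) : Prop :=
  A.map List.length = rows ∧
  A.reverse.map negRow = A ∧
  (∀ row ∈ A, List.Chain' (· ≤ ·) row) ∧
  ((∀ x ∈ A.flatten, ∃ z : ℤ, x = (z : ℚ)) ∨
   (∀ x ∈ A.flatten, ∃ z : ℤ, x = (z : ℚ) + 1 / 2))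

lemma contentP3' (c b a : ℕ) :
    contentP [c, b, a] = ({a / 2, (b + 1) / 2, (c + 2) / 2} : Multiset ℕ) := by
  simp [contentP, List.range_succ]; rfl

lemma contentP2' (b a : ℕ) :
    contentP [b, a] = ({0, (a + 1) / 2, (b + 2) / 2} : Multiset ℕ) := by
  simp [contentP, List.range_succ]; rfl

lemma contentP_card' (q : List ℕ) : (contentP q).card =
    if q.length % 2 = 1 then q.length else q.length + 1 := by
  simp [contentP]
  split <;> simp_all

/-- Let `l ≤ m` be even positive integers.  Then
`content((l, l, m)) = {l/2, l/2, m/2 + 1}`, and the only partition of `2l + m`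
(weakly decreasing list of positive naturals) whose content equals
`content((l, l, m))` is `(l, l, m)` (parts listed in increasing order, i.e.
the decreasing list `[m, l, l]`). -/
theorem stmt12 (l m : ℕ) (hl : 0 < l) (hlm : l ≤ m) (hl2 : 2 ∣ l) (hm2 : 2 ∣ m) :
    contentP [m, l, l] = ({l / 2, l / 2, m / 2 + 1} : Multiset ℕ) ∧
    ∀ q : List ℕ, List.Chain' (· ≥ ·) q → (∀ x ∈ q, 0 < x) → q.sum = 2 * l + m →
      (contentP q = contentP [m, l, l] ↔ q = [m, l, l]) := by

  have key : contentP [m, l, l] = ({l / 2, l / 2, m / 2 + 1} : Multiset ℕ) := by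
    rw [contentP3']
    have e1 : (l + 1) / 2 = l / 2 := by omega
    have e2 : (m + 2) / 2 = m / 2 + 1 := by omega
    rw [e1, e2]
  refine ⟨key, ?_⟩
  intro q hchain hpos hsum
  constructor
  · intro hq
    rw [key] at hq
    have hcard := congrArg Multiset.card hq
    rw [contentP_card'] at hcard
    simp at hcard
    have hlen : q.length = 3 ∨ q.length = 2 := by
      split at hcard <;> omega
    rcases hlen with h3 | h2
    · obtain ⟨c, b, a, rfl⟩ := List.length_eq_three.mp h3
      rw [contentP3'] at hq
      have hba : b ≥ a := (List.isChain_cons_cons.mp (List.isChain_cons_cons.mp hchain).2).1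
      have hcb : c ≥ b := (List.isChain_cons_cons.mp hchain).1
      have hsum3 : c + (b + a) = 2 * l + m := by simpa using hsum
      have h1 : a / 2 ∈ ({l / 2, l / 2, m / 2 + 1} : Multiset ℕ) := by
        rw [← hq]; simp
      have h2 : (b + 1) / 2 ∈ ({l / 2, l / 2, m / 2 + 1} : Multiset ℕ) := by
        rw [← hq]; simp
      have h3' : (c + 2) / 2 ∈ ({l / 2, l / 2, m / 2 + 1} : Multiset ℕ) := by
        rw [← hq]; simp
      have hs := congrArg Multiset.sum hq
      simp [Multiset.sum_cons] at hs h1 h2 h3'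
      have : c = m ∧ b = l ∧ a = l := by omega
      simp [this.1, this.2.1, this.2.2]
    · obtain ⟨b, a, rfl⟩ := List.length_eq_two.mp h2
      rw [contentP2'] at hq
      have h0 : (0 : ℕ) ∈ ({l / 2, l / 2, m / 2 + 1} : Multiset ℕ) := by
        rw [← hq]; simp
      simp at h0
      omega
  · rintro rfl; rfl

end BG
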